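/- Let F be a field with char(F) ≠ 2, and for λ ∈ F let A₆(λ) be the algebra on F³ with multiplication e₁·e₂ = e₂, e₁·e₃ = λe₃ (other basis products zero or determined by anti-commutativity). Then for every nonzero λ ∈ F, the algebras A₆(λ) and A₆(1/λ) are isomorphic. -/

import Mathlib

def mulA6 {F : Type*} [Field F] (l : F) (x y : Fin 3 → F) : Fin 3 → F :=
  ![0,
    (x 0 * y 1 - x 1 * y 0),
    l * (x 0 * y 2 - x 2 * y 0)]

theorem A6_lambda_iso_A6_inv_lambda
    (F : Type*) [Field F] (hchar : ringChar F ≠ 2)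
    (l : F) (hl : l ≠ 0) :
    ∃ g : (Fin 3 → F) ≃ₗ[F] (Fin 3 → F),
      ∀ x y : Fin 3 → F, g (mulA6 l x y) = mulA6 l⁻¹ (g x) (g y) := by
  refine ⟨{ toFun := fun x => ![l * x 0, x 2, x 1],
            invFun := fun x => ![l⁻¹ * x 0, x 2, x 1],
            map_add' := by
              intro x y; funext i; fin_cases i <;> simp <;> ring,
            map_smul' := by
              intro c x; funext i; fin_cases i <;> simp <;> ring,
            left_inv := by
              intro x; funext i; fin_cases i <;> simp <;> field_simp,
            right_inv := by
              intro x; funext i; fin_cases i <;> simp <;> field_simp }, ?_⟩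
  intro x y
  funext i
  fin_cases i <;> simp [mulA6] <;> (first | (have hll := mul_inv_cancel₀ hl; linear_combination (-(x 0 * y 1 - x 1 * y 0)) * hll) | (field_simp; ring) | ring | field_simp)
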